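/- Consider a fully homogeneous BNPG on a finite simple graph G with common externality function g such that Δg is strictly increasing (g strictly convex) and common cost c, and let x be a non-trivial PSNE with set of investing players S (so ∅ ≠ S ⊊ V). Then the set {m ∈ ℕ : c ≤ Δg(m)} is nonempty; letting k be its least element, every player i ∈ S has at least k neighbors in S, i.e., the subgraph of G induced on S has minimum degree at least k. -/
import Mathlib


/-- Finite difference `Δg(m) = g(m+1) − g(m)`. -/
def Δg (g : ℕ → ℝ) (m : ℕ) : ℝ := g (m + 1) - g m

/-- Number of investing neighbors of player `i` under profile `x` in graph `G`. -/
noncomputable def nInv {V : Type*} (G : SimpleGraph V) (x : V → Bool) (i : V) : ℕ :=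
  {j | G.Adj i j ∧ x j = true}.ncard

/-- Pure-strategy Nash equilibrium of the BNPG on `G` with externalities `g` and costs `c`. -/
def IsPSNE {V : Type*} (G : SimpleGraph V) (g : V → ℕ → ℝ) (c : V → ℝ)
    (x : V → Bool) : Prop :=
  ∀ i, (x i = true → c i ≤ Δg (g i) (nInv G x i)) ∧
       (x i = false → Δg (g i) (nInv G x i) ≤ c i)


/-- fully homogeneous BNPG with strictly convex `g`; if `x` is a non-trivial
PSNE with investing set `S = {i | x i = true}` (so `∅ ≠ S ⊊ V`), then
`{m : c ≤ Δg(m)}` is nonempty, and with `k` its least element every player of `S` has at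
least `k` neighbors in `S`. -/
theorem stmt9 {V : Type*} [Fintype V] (G : SimpleGraph V)
    (g : ℕ → ℝ) (hmono : Monotone g) (hconv : StrictMono (Δg g)) (c : ℝ)
    (x : V → Bool) (hx : IsPSNE G (fun _ => g) (fun _ => c) x)
    (hne : {i | x i = true}.Nonempty) (hproper : {i | x i = true} ≠ Set.univ) :
    {m : ℕ | c ≤ Δg g m}.Nonempty ∧
    ∀ i, x i = true →
      sInf {m : ℕ | c ≤ Δg g m} ≤ {j | G.Adj i j ∧ x j = true}.ncard := by
  have key : ∀ i, x i = true → nInv G x i ∈ {m : ℕ | c ≤ Δg g m} := fun i hi =>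
    (hx i).1 hi
  obtain ⟨i0, hi0⟩ := hne
  exact ⟨⟨_, key i0 hi0⟩, fun i hi => Nat.sInf_le (key i hi)⟩
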